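/- Let (E, ≺) be a finite poset with an indexed chain partition into n disjoint chains, and let (S, <) be its ES-transform. The map sending each lower set G of (E, ≺) to the set { [i, k_i] : 1 ≤ i ≤ n }, where k_i = |G ∩ image(e_i)|, is a bijection from the set of lower sets of (E, ≺) onto the set of antichains of cardinality n of (S, <). -/

import Mathlib

open scoped Classical

/-- An *indexed chain partition* of a poset `E` into `n` disjoint chains:
numbers `m i ≥ 1` and maps `e i : {1,…,m i} → E` which are strictly
order-preserving (hence injective), have pairwise disjoint images, and
jointly cover `E`.  Write `(i,k)` for `e i k`. -/
structure EventCP (E : Type*) [PartialOrder E] (n : ℕ) where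
  m : Fin n → ℕ
  one_le_m : ∀ i : Fin n, 1 ≤ m i
  e : Fin n → ℕ → E
  mono : ∀ i : Fin n, ∀ k l : ℕ, 1 ≤ k → k < l → l ≤ m i → e i k < e i l
  disj : ∀ i j : Fin n, i ≠ j → ∀ k l : ℕ,
    1 ≤ k → k ≤ m i → 1 ≤ l → l ≤ m j → e i k ≠ e j l
  cover : ∀ x : E, ∃ i : Fin n, ∃ k : ℕ, 1 ≤ k ∧ k ≤ m i ∧ e i k = x

variable {E : Type*} [PartialOrder E] {n : ℕ}

/-- The state set of the ES-transform: `S = {[i,k] : 0 ≤ k ≤ m i}`, realized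
as the pairs `(i,k)` of `Fin n × ℕ` with `k ≤ m i`. -/
def EventCP.StateSet (P : EventCP E n) : Set (Fin n × ℕ) :=
  {p | p.2 ≤ P.m p.1}

/-- The ES-transform strict relation on states: `[i,r] < [j,s]` iff `r < s`
when `i = j`, and iff `r + 1 ≤ m i`, `1 ≤ s`, and `(i,r+1) ≺ (j,s)` in `E`
when `i ≠ j`. -/
def EventCP.slt (P : EventCP E n) (a b : Fin n × ℕ) : Prop :=
  if a.1 = b.1 then a.2 < b.2
  else a.2 + 1 ≤ P.m a.1 ∧ 1 ≤ b.2 ∧ P.e a.1 (a.2 + 1) < P.e b.1 b.2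

/-- Two states are *incomparable* in the ES-transform. -/
def EventCP.IncompS (P : EventCP E n) (a b : Fin n × ℕ) : Prop :=
  a ≠ b ∧ ¬ P.slt a b ∧ ¬ P.slt b a

/-- A finset of states is an *antichain* of the ES-transform `(S, <)`:
it consists of states and is pairwise incomparable. -/
def EventCP.IsACS (P : EventCP E n) (A : Finset (Fin n × ℕ)) : Prop :=
  ↑A ⊆ P.StateSet ∧ ∀ a ∈ A, ∀ b ∈ A, a ≠ b → P.IncompS a b

/-- The *width* of the ES-transform `(S, <)`: the maximum cardinality of an
antichain. -/
noncomputable def EventCP.widthS (P : EventCP E n) : ℕ :=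
  sSup {c : ℕ | ∃ A : Finset (Fin n × ℕ), P.IsACS A ∧ A.card = c}

/-- A finset of `E` is a *lower set* (down-set). -/
def IsLowerSetF {E : Type*} [PartialOrder E] (G : Finset E) : Prop :=
  ∀ f ∈ G, ∀ x : E, x < f → x ∈ G

/-- The map sending a lower set `G` of `E` to the state set
`{[i, kᵢ] : 1 ≤ i ≤ n}` where `kᵢ = |G ∩ image (e i)|`. -/
noncomputable def EventCP.cutMap (P : EventCP E n) (G : Finset E) :
    Finset (Fin n × ℕ) :=
  Finset.univ.image fun i : Fin n =>
    (i, (G.filter fun x => ∃ k : ℕ, 1 ≤ k ∧ k ≤ P.m i ∧ P.e i k = x).card)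

namespace EventCP

variable (P : EventCP E n)

lemma mono_le {i : Fin n} {k l : ℕ} (h1 : 1 ≤ k) (hkl : k ≤ l) (hlm : l ≤ P.m i) :
    P.e i k ≤ P.e i l := by
  rcases eq_or_lt_of_le hkl with rfl | h
  · exact le_rfl
  · exact (P.mono i k l h1 h hlm).le

lemma e_lt_iff {i : Fin n} {k l : ℕ} (h1 : 1 ≤ k) (h1' : 1 ≤ l)
    (hk : k ≤ P.m i) (hl : l ≤ P.m i) : P.e i k < P.e i l ↔ k < l := by
  constructor
  · intro h
    by_contra hnot
    push_neg at hnot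
    exact absurd (P.mono_le h1' hnot hk) (not_le_of_gt h)
  · intro h; exact P.mono i k l h1 h hl

lemma e_inj {i : Fin n} {k l : ℕ} (h1 : 1 ≤ k) (h1' : 1 ≤ l)
    (hk : k ≤ P.m i) (hl : l ≤ P.m i) (h : P.e i k = P.e i l) : k = l := by
  by_contra hne
  rcases lt_or_gt_of_ne hne with h' | h'
  · exact absurd h (ne_of_lt (P.mono i k l h1 h' hl))
  · exact absurd h.symm (ne_of_lt (P.mono i l k h1' h' hk))

noncomputable def kOf (G : Finset E) (i : Fin n) : ℕ :=
  (G.filter fun x => ∃ k : ℕ, 1 ≤ k ∧ k ≤ P.m i ∧ P.e i k = x).card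

noncomputable def chainIdx (G : Finset E) (i : Fin n) : Finset ℕ :=
  (Finset.Icc 1 (P.m i)).filter fun k => P.e i k ∈ G

lemma filter_eq_image (G : Finset E) (i : Fin n) :
    (G.filter fun x => ∃ k : ℕ, 1 ≤ k ∧ k ≤ P.m i ∧ P.e i k = x)
      = (P.chainIdx G i).image (P.e i) := by
  ext x
  simp only [chainIdx, Finset.mem_filter, Finset.mem_image, Finset.mem_Icc]
  constructor
  · rintro ⟨hx, k, h1, hm, rfl⟩; exact ⟨k, ⟨⟨h1, hm⟩, hx⟩, rfl⟩
  · rintro ⟨k, ⟨⟨h1, hm⟩, hx⟩, rfl⟩; exact ⟨hx, k, h1, hm, rfl⟩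

lemma kOf_eq_card (G : Finset E) (i : Fin n) :
    P.kOf G i = (P.chainIdx G i).card := by
  rw [kOf, filter_eq_image]
  refine Finset.card_image_of_injOn ?_
  intro k hk l hl h
  simp only [chainIdx, Finset.mem_coe, Finset.mem_filter, Finset.mem_Icc] at hk hl
  exact P.e_inj hk.1.1 hl.1.1 hk.1.2 hl.1.2 h

lemma kOf_le_m (G : Finset E) (i : Fin n) : P.kOf G i ≤ P.m i := by
  rw [kOf_eq_card]
  calc (P.chainIdx G i).card ≤ (Finset.Icc 1 (P.m i)).card :=
        Finset.card_le_card (Finset.filter_subset _ _)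
    _ = P.m i := by simp [Nat.card_Icc]

lemma mem_iff_le_kOf {G : Finset E} (hG : IsLowerSetF G) {i : Fin n} {k : ℕ}
    (h1 : 1 ≤ k) (hm : k ≤ P.m i) : P.e i k ∈ G ↔ k ≤ P.kOf G i := by
  have hdown : ∀ l ∈ P.chainIdx G i, ∀ j : ℕ, 1 ≤ j → j ≤ l → j ∈ P.chainIdx G i := by
    intro l hl j hj1 hjl
    simp only [chainIdx, Finset.mem_filter, Finset.mem_Icc] at hl ⊢
    refine ⟨⟨hj1, le_trans hjl hl.1.2⟩, ?_⟩
    rcases eq_or_lt_of_le hjl with rfl | hlt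
    · exact hl.2
    · exact hG _ hl.2 _ (P.mono i j l hj1 hlt hl.1.2)
  rw [kOf_eq_card]
  rcases Finset.eq_empty_or_nonempty (P.chainIdx G i) with he | hne
  · rw [he]
    simp only [Finset.card_empty]
    constructor
    · intro hx
      have : k ∈ P.chainIdx G i := by
        simp [chainIdx, Finset.mem_filter, Finset.mem_Icc, h1, hm, hx]
      rw [he] at this; exact absurd this (Finset.notMem_empty _)
    · intro h; omega
  · set t := (P.chainIdx G i).max' hne with ht
    have heq : P.chainIdx G i = Finset.Icc 1 t := by
      apply Finset.Subset.antisymm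
      · intro j hj
        have := Finset.le_max' _ j hj
        simp only [chainIdx, Finset.mem_filter, Finset.mem_Icc] at hj
        simp [Finset.mem_Icc, hj.1.1, ht, this]
      · intro j hj
        simp only [Finset.mem_Icc] at hj
        exact hdown t ((P.chainIdx G i).max'_mem hne) j hj.1 hj.2
    rw [heq]
    simp only [Nat.card_Icc]
    have hk_mem : P.e i k ∈ G ↔ k ∈ P.chainIdx G i := by
      simp [chainIdx, Finset.mem_filter, Finset.mem_Icc, h1, hm]
    rw [hk_mem, heq]
    simp only [Finset.mem_Icc]
    omega

end EventCP

/-- `cutMap` is a bijection from the lower sets of `(E, ≺)`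
onto the antichains of cardinality `n` of the ES-transform `(S, <)`. -/
theorem ES_transform_cut_bijection (P : EventCP E n) [Fintype E] :
    Set.BijOn P.cutMap {G : Finset E | IsLowerSetF G}
      {A : Finset (Fin n × ℕ) | P.IsACS A ∧ A.card = n} := by
  have cutMap_def : ∀ G : Finset E,
      P.cutMap G = Finset.univ.image fun i => (i, P.kOf G i) := fun _ => rfl
  constructor
  · -- MapsTo
    intro G hG
    simp only [Set.mem_setOf_eq] at hG ⊢
    have hcard : (P.cutMap G).card = n := by
      rw [cutMap_def]
      rw [Finset.card_image_of_injective _ (fun i j h => (Prod.ext_iff.mp h).1)]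
      simp
    refine ⟨⟨?_, ?_⟩, hcard⟩
    · intro p hp
      rw [cutMap_def] at hp
      simp only [Finset.coe_image, Set.mem_image, Finset.coe_univ, Set.mem_univ] at hp
      obtain ⟨i, -, rfl⟩ := hp
      exact P.kOf_le_m G i
    · intro a ha b hb hab
      rw [cutMap_def] at ha hb
      simp only [Finset.mem_image, Finset.mem_univ, true_and] at ha hb
      obtain ⟨i, rfl⟩ := ha
      obtain ⟨j, rfl⟩ := hb
      have hij : i ≠ j := fun h => hab (by rw [h])
      have key : ∀ i j : Fin n, i ≠ j → ¬ P.slt (i, P.kOf G i) (j, P.kOf G j) := by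
        intro i j hij hs
        rw [EventCP.slt, if_neg hij] at hs
        obtain ⟨h1', h2', h3'⟩ := hs
        have h1 : P.kOf G i + 1 ≤ P.m i := h1'
        have h2 : 1 ≤ P.kOf G j := h2'
        have h3 : P.e i (P.kOf G i + 1) < P.e j (P.kOf G j) := h3'
        have hbj : P.e j (P.kOf G j) ∈ G :=
          (P.mem_iff_le_kOf hG h2 (P.kOf_le_m G j)).mpr le_rfl
        have hin : P.e i (P.kOf G i + 1) ∈ G := hG _ hbj _ h3
        have := (P.mem_iff_le_kOf hG (Nat.le_add_left 1 _) h1).mp hin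
        omega
      exact ⟨hab, key i j hij, key j i hij.symm⟩
  constructor
  · -- InjOn
    intro G hG G' hG' heq
    simp only [Set.mem_setOf_eq] at hG hG'
    have hk : ∀ i, P.kOf G i = P.kOf G' i := by
      intro i
      have hmem : (i, P.kOf G i) ∈ P.cutMap G' := by
        rw [← heq, cutMap_def]
        exact Finset.mem_image_of_mem _ (Finset.mem_univ i)
      rw [cutMap_def] at hmem
      simp only [Finset.mem_image, Finset.mem_univ, true_and] at hmem
      obtain ⟨j, hj⟩ := hmem
      simp only [Prod.mk.injEq] at hj
      obtain ⟨rfl, h2⟩ := hj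
      exact h2.symm
    ext x
    obtain ⟨i, k, h1, hm, rfl⟩ := P.cover x
    rw [P.mem_iff_le_kOf hG h1 hm, P.mem_iff_le_kOf hG' h1 hm, hk]
  · -- SurjOn
    intro A hA
    simp only [Set.mem_setOf_eq] at hA
    obtain ⟨⟨hSS, hpair⟩, hcard⟩ := hA
    have hfst : ∀ a ∈ A, ∀ b ∈ A, a.1 = b.1 → a = b := by
      intro a ha b hb h1
      by_contra hne
      obtain ⟨-, hs1, hs2⟩ := hpair a ha b hb hne
      rw [EventCP.slt, if_pos h1] at hs1
      rw [EventCP.slt, if_pos h1.symm] at hs2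
      exact hne (Prod.ext h1 (by omega))
    have hsurj : ∀ i : Fin n, ∃ p ∈ A, p.1 = i := by
      intro i
      have himg : A.image Prod.fst = Finset.univ := by
        apply Finset.eq_univ_of_card
        rw [Finset.card_image_of_injOn (fun a ha b hb h => hfst a ha b hb h), hcard]
        simp
      have hi : i ∈ A.image Prod.fst := himg ▸ Finset.mem_univ i
      simpa using hi
    choose p hp hpfst using hsurj
    set k : Fin n → ℕ := fun i => (p i).2 with hkdef
    have hpe : ∀ i, p i = (i, k i) := fun i => Prod.ext (hpfst i) rfl
    have hkm : ∀ i, k i ≤ P.m i := by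
      intro i
      have hss := hSS (hp i)
      rw [EventCP.StateSet] at hss
      simp only [Set.mem_setOf_eq, hpe i] at hss
      exact hss
    have hAeq : A = Finset.univ.image fun i => (i, k i) := by
      apply Finset.Subset.antisymm
      · intro a ha
        simp only [Finset.mem_image, Finset.mem_univ, true_and]
        refine ⟨a.1, ?_⟩
        rw [← hpe a.1]
        exact (hfst _ (hp a.1) _ ha (hpfst a.1))
      · intro a ha
        simp only [Finset.mem_image, Finset.mem_univ, true_and] at ha
        obtain ⟨i, rfl⟩ := ha
        rw [← hpe i]; exact hp i
    have hincomp : ∀ i j : Fin n, i ≠ j → ¬ P.slt (i, k i) (j, k j) := by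
      intro i j hij hs
      have hne : (i, k i) ≠ (j, k j) := fun h => hij (Prod.ext_iff.mp h).1
      have hi : (i, k i) ∈ A := by rw [← hpe i]; exact hp i
      have hj : (j, k j) ∈ A := by rw [← hpe j]; exact hp j
      exact (hpair _ hi _ hj hne).2.1 hs
    set G : Finset E :=
      Finset.univ.filter (fun x => ∃ i : Fin n, ∃ l : ℕ, 1 ≤ l ∧ l ≤ k i ∧ P.e i l = x)
      with hGdef
    have hmemG : ∀ i : Fin n, ∀ l : ℕ, 1 ≤ l → l ≤ P.m i →
        (P.e i l ∈ G ↔ l ≤ k i) := by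
      intro i l h1 hm
      constructor
      · intro h
        rw [hGdef, Finset.mem_filter] at h
        obtain ⟨-, j, l', h1', hl', hel⟩ := h
        by_cases hji : j = i
        · subst hji
          have := P.e_inj h1' h1 (le_trans hl' (hkm j)) hm hel
          omega
        · exact absurd hel (P.disj j i hji _ _ h1' (le_trans hl' (hkm j)) h1 hm)
      · intro h
        rw [hGdef, Finset.mem_filter]
        exact ⟨Finset.mem_univ _, i, l, h1, h, rfl⟩
    have hGlower : IsLowerSetF G := by
      intro f hf x hx
      rw [hGdef, Finset.mem_filter] at hf
      obtain ⟨-, j, l, h1, hl, rfl⟩ := hf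
      obtain ⟨i, kk, hk1, hkkm, rfl⟩ := P.cover x
      by_cases hij : i = j
      · subst hij
        have hlm : l ≤ P.m i := le_trans hl (hkm i)
        have := (P.e_lt_iff hk1 h1 hkkm hlm).mp hx
        exact (hmemG i kk hk1 hkkm).mpr (by omega)
      · by_contra hnotin
        have hkk : ¬ kk ≤ k i := fun h => hnotin ((hmemG i kk hk1 hkkm).mpr h)
        push_neg at hkk
        apply hincomp i j hij
        rw [EventCP.slt, if_neg hij]
        show k i + 1 ≤ P.m i ∧ 1 ≤ k j ∧ P.e i (k i + 1) < P.e j (k j)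
        refine ⟨by omega, le_trans h1 hl, ?_⟩
        calc P.e i (k i + 1) ≤ P.e i kk := P.mono_le (by omega) (by omega) hkkm
          _ < P.e j l := hx
          _ ≤ P.e j (k j) := P.mono_le h1 hl (hkm j)
    refine ⟨G, hGlower, ?_⟩
    have hkOf : ∀ i, P.kOf G i = k i := by
      intro i
      have hb1 : P.kOf G i ≤ P.m i := P.kOf_le_m G i
      have hb2 : k i ≤ P.m i := hkm i
      have hch : ∀ t : ℕ, 1 ≤ t → t ≤ P.m i → (t ≤ P.kOf G i ↔ t ≤ k i) := by
        intro t h1 hm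
        rw [← P.mem_iff_le_kOf hGlower h1 hm, hmemG i t h1 hm]
      have h1m := P.one_le_m i
      by_contra hne
      rcases lt_or_gt_of_ne hne with h | h
      · have := (hch (P.kOf G i + 1) (by omega) (by omega)).mpr (by omega); omega
      · have := (hch (k i + 1) (by omega) (by omega)).mp (by omega); omega
    rw [cutMap_def, hAeq]
    exact Finset.image_congr (fun i _ => by rw [hkOf])
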